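/- Let F : A → B be a functor between groupoids that is injective on objects, an equivalence of categories, and admits a retraction R : B → A with R ∘ F = id_A. If moreover the functor (dom,cod) : Arr(B) → B × B has the right lifting property against F, then R is a quasi-inverse of F, i.e. F is an adjoint equivalence. -/

import Mathlib

open CategoryTheory

universe u v

/-- The endpoint functor `(dom, cod) : Arr(B) ⥤ B × B`. -/
def endpoints (B : Type u) [Groupoid.{v} B] : Arrow B ⥤ B × B where
  obj f := (f.left, f.right)
  map φ := (φ.left, φ.right)

lemma prod_eqToHom {C D : Type*} [Category C] [Category D] {X Y : C × D} (h : X = Y) :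
    eqToHom h = (eqToHom (congrArg Prod.fst h), eqToHom (congrArg Prod.snd h)) := by
  subst h; rfl

theorem stmt6 {A B : Type u} [Groupoid.{u} A] [Groupoid.{u} B]
    (F : A ⥤ B) (hinj : Function.Injective F.obj) (heq : F.IsEquivalence)
    (R : B ⥤ A) (hR : F ⋙ R = 𝟭 A)
    (hlift : ∀ (U : A ⥤ Arrow B) (V : B ⥤ B × B),
      F ⋙ V = U ⋙ endpoints B →
      ∃ L : B ⥤ Arrow B, F ⋙ L = U ∧ L ⋙ endpoints B = V) :
    Nonempty (F ⋙ R ≅ 𝟭 A) ∧ Nonempty (R ⋙ F ≅ 𝟭 B) := by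
  refine ⟨⟨eqToIso hR⟩, ?_⟩
  let U : A ⥤ Arrow B :=
    { obj := fun a => Arrow.mk (𝟙 (F.obj a))
      map := fun f => Arrow.homMk (u := F.map f) (v := F.map f) (by simp)
      map_id := by intro a; ext <;> simp
      map_comp := by intro a b c f g; ext <;> simp }
  let V : B ⥤ B × B := (R ⋙ F).prod' (𝟭 B)
  have hcomm : F ⋙ V = U ⋙ endpoints B := by
    have hobj : ∀ a, (F ⋙ V).obj a = (U ⋙ endpoints B).obj a := by
      intro a
      have := Functor.congr_obj hR a
      simp only [Functor.comp_obj, Functor.id_obj] at this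
      simp [U, V, endpoints, this]
    refine CategoryTheory.Functor.ext hobj ?_
    intro a a' f
    have := Functor.congr_hom hR f
    simp only [Functor.comp_map, Functor.id_map] at this
    rw [prod_eqToHom, prod_eqToHom]
    simp [U, V, endpoints, prod_eqToHom, prod_comp, this, eqToHom_map]
    erw [eqToHom_refl, Category.id_comp]
  obtain ⟨L, hFL, hLE⟩ := hlift U V hcomm
  have hL1 : L ⋙ endpoints B ⋙ CategoryTheory.Prod.fst B B = R ⋙ F := by
    rw [← Functor.assoc, hLE]; rfl
  have hL2 : L ⋙ endpoints B ⋙ CategoryTheory.Prod.snd B B = 𝟭 B := by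
    rw [← Functor.assoc, hLE]; rfl
  have hobj1 : ∀ b : B, (L.obj b).left = F.obj (R.obj b) := fun b => Functor.congr_obj hL1 b
  have hobj2 : ∀ b : B, (L.obj b).right = b := fun b => Functor.congr_obj hL2 b
  let η : R ⋙ F ⟶ 𝟭 B :=
    { app := fun b => eqToHom (hobj1 b).symm ≫ (L.obj b).hom ≫ eqToHom (hobj2 b)
      naturality := by
        intro b b' f
        have h1 : (L.map f).left = eqToHom (hobj1 b) ≫ F.map (R.map f) ≫ eqToHom (hobj1 b').symm :=
          Functor.congr_hom hL1 f
        have h2 : (L.map f).right = eqToHom (hobj2 b) ≫ f ≫ eqToHom (hobj2 b').symm :=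
          Functor.congr_hom hL2 f
        have hw := Arrow.w (L.map f)
        rw [h1, h2] at hw
        simp only [Functor.comp_map, Functor.id_map, Functor.comp_obj, Functor.id_obj]
        simp only [Category.assoc] at hw ⊢
        rw [← cancel_epi (eqToHom (hobj1 b))]
        simp [hw]
        simp [reassoc_of% hw] }
  haveI : IsIso η := NatIso.isIso_of_isIso_app η
  exact ⟨asIso η⟩
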